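/- Let t ≥ 1 be an integer, let X be a finite set of positive integers contained in {1,…,t}, let m = ⌊log₂ t⌋ + 1, and for i = 1,…,m let X_i = {x ∈ X : t/2^i < x ≤ t/2^{i−1}}. Then the sets X_1,…,X_m partition X, and SUMS(X) ∩ [t] = ((SUMS_{≤2}(X_1) ∩ [t]) + (SUMS_{≤4}(X_2) ∩ [t]) + ⋯ + (SUMS_{≤2^m}(X_m) ∩ [t])) ∩ [t]. -/

import Mathlib

open Pointwise

/-- `SUM S` is the sum of the elements of the finite set `S`. -/
def SUM (S : Finset ℕ) : ℕ := S.sum id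

/-- `SUMSle X k` is the set of all subset sums of `X` using at most `k` elements. -/
def SUMSle (X : Finset ℕ) (k : ℕ) : Set ℕ := {y | ∃ S ⊆ X, S.card ≤ k ∧ SUM S = y}

/-- `SUMS X` is the set of all subset sums of `X`. -/
def SUMS (X : Finset ℕ) : Set ℕ := {y | ∃ S ⊆ X, SUM S = y}

theorem stmt_19 (t : ℕ) (ht : 1 ≤ t) (X : Finset ℕ)
    (hX : ∀ x ∈ X, x ∈ Finset.Icc 1 t)
    (m : ℕ) (hm : m = Nat.log 2 t + 1)
    (Xs : ℕ → Finset ℕ)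
    (hXs : ∀ i x, x ∈ Xs i ↔
      x ∈ X ∧ (t : ℝ) / 2 ^ i < (x : ℝ) ∧ (x : ℝ) ≤ (t : ℝ) / 2 ^ (i - 1)) :
    ((∀ i ∈ Finset.Icc 1 m, ∀ j ∈ Finset.Icc 1 m, i ≠ j → Disjoint (Xs i) (Xs j)) ∧
      (Finset.Icc 1 m).biUnion Xs = X) ∧
    SUMS X ∩ Set.Iic t =
      (∑ i ∈ Finset.Icc 1 m, (SUMSle (Xs i) (2 ^ i) ∩ Set.Iic t)) ∩ Set.Iic t := by
  classical
  -- natural-number characterization of membership in `Xs i`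
  have hXs' : ∀ i x, x ∈ Xs i ↔ x ∈ X ∧ t < x * 2 ^ i ∧ x * 2 ^ (i - 1) ≤ t := by
    intro i x
    rw [hXs]
    have h1 : (0:ℝ) < 2 ^ i := by positivity
    have h2 : (0:ℝ) < 2 ^ (i-1) := by positivity
    rw [div_lt_iff₀ h1, le_div_iff₀ h2]
    constructor
    · rintro ⟨hx, ha, hb⟩
      exact ⟨hx, by exact_mod_cast ha, by exact_mod_cast hb⟩
    · rintro ⟨hx, ha, hb⟩
      exact ⟨hx, by exact_mod_cast ha, by exact_mod_cast hb⟩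
  -- pairwise disjointness
  have hdisj : ∀ i ∈ Finset.Icc 1 m, ∀ j ∈ Finset.Icc 1 m, i ≠ j → Disjoint (Xs i) (Xs j) := by
    have key : ∀ i j : ℕ, i < j → Disjoint (Xs i) (Xs j) := by
      intro i j hij
      rw [Finset.disjoint_left]
      intro x hxi hxj
      obtain ⟨-, hti, -⟩ := (hXs' i x).1 hxi
      obtain ⟨-, -, htj⟩ := (hXs' j x).1 hxj
      have hle : x * 2 ^ i ≤ x * 2 ^ (j-1) :=
        Nat.mul_le_mul_left _ (Nat.pow_le_pow_right (by norm_num) (by omega))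
      omega
    intro i _ j _ hij
    rcases lt_or_gt_of_ne hij with h | h
    · exact key i j h
    · exact (key j i h).symm
  -- the union
  have hunion : (Finset.Icc 1 m).biUnion Xs = X := by
    apply Finset.Subset.antisymm
    · intro x hx
      obtain ⟨i, _, hxi⟩ := Finset.mem_biUnion.1 hx
      exact ((hXs i x).1 hxi).1
    · intro x hx
      have hx1 : 1 ≤ x := (Finset.mem_Icc.1 (hX x hx)).1
      have hxt : x ≤ t := (Finset.mem_Icc.1 (hX x hx)).2
      set k := Nat.log 2 (t / x) with hk
      have hdx : 1 ≤ t / x := (Nat.one_le_div_iff (by omega)).2 hxt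
      have h1 : 2 ^ k ≤ t / x := Nat.pow_log_le_self 2 (by omega)
      have h2 : t / x < 2 ^ (k+1) := Nat.lt_pow_succ_log_self (by norm_num) _
      have hub : x * 2 ^ k ≤ t := by
        have h3 := (Nat.le_div_iff_mul_le (by omega : 0 < x)).1 h1
        linarith
      have hlb : t < x * 2 ^ (k+1) := by
        have h4 := (Nat.div_lt_iff_lt_mul (by omega : 0 < x)).1 h2
        linarith
      have hkm : k + 1 ≤ m := by
        rw [hm]
        have := Nat.log_mono_right (b := 2) (Nat.div_le_self t x)
        omega
      refine Finset.mem_biUnion.2 ⟨k+1, Finset.mem_Icc.2 ⟨by omega, hkm⟩, ?_⟩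
      exact (hXs' (k+1) x).2 ⟨hx, hlb, by simpa using hub⟩
  refine ⟨⟨hdisj, hunion⟩, ?_⟩
  -- cardinality bound
  have hcard : ∀ i S, S ⊆ Xs i → SUM S ≤ t → S.card ≤ 2 ^ i := by
    intro i S hS hsum
    by_contra h
    push_neg at h
    have hp : 0 < 2 ^ i := Nat.pow_pos (by norm_num)
    have hx : ∀ x ∈ S, t / 2 ^ i + 1 ≤ (id x : ℕ) := by
      intro x hxS
      obtain ⟨-, ha, -⟩ := (hXs' i x).1 (hS hxS)
      have := (Nat.div_lt_iff_lt_mul hp).2 ha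
      simpa using Nat.succ_le_of_lt this
    have hS1 : S.card • (t / 2 ^ i + 1) ≤ SUM S := Finset.card_nsmul_le_sum S id _ hx
    rw [smul_eq_mul] at hS1
    have h5 : (2 ^ i + 1) * (t / 2 ^ i + 1) ≤ S.card * (t / 2 ^ i + 1) :=
      Nat.mul_le_mul_right _ (by omega)
    have h6 : t < (2 ^ i + 1) * (t / 2 ^ i + 1) := by
      nlinarith [Nat.mod_add_div t (2 ^ i), Nat.mod_lt t hp]
    omega
  -- pairwise disjointness of subset families
  have hpd : ∀ F : ℕ → Finset ℕ, (∀ i ∈ Finset.Icc 1 m, F i ⊆ Xs i) →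
      (↑(Finset.Icc 1 m) : Set ℕ).PairwiseDisjoint F := by
    intro F hF i hi j hj hij
    exact (hdisj i hi j hj hij).mono (hF i hi) (hF j hj)
  ext y
  simp only [Set.mem_inter_iff, Set.mem_Iic]
  constructor
  · rintro ⟨⟨S, hS, rfl⟩, hyt⟩
    refine ⟨?_, hyt⟩
    rw [Set.mem_finset_sum]
    have hsub : ∀ i ∈ Finset.Icc 1 m, S ∩ Xs i ⊆ Xs i := fun i _ => Finset.inter_subset_right
    refine ⟨fun i => SUM (S ∩ Xs i), fun {i} hi => ?_, ?_⟩
    · have hle : SUM (S ∩ Xs i) ≤ SUM S :=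
        Finset.sum_le_sum_of_subset Finset.inter_subset_left
      exact ⟨⟨S ∩ Xs i, Finset.inter_subset_right,
        hcard i _ Finset.inter_subset_right (le_trans hle hyt), rfl⟩, le_trans hle hyt⟩
    · have hSeq : S = (Finset.Icc 1 m).biUnion (fun i => S ∩ Xs i) := by
        ext x
        simp only [Finset.mem_biUnion, Finset.mem_inter]
        constructor
        · intro hxS
          have hxX : x ∈ X := hS hxS
          rw [← hunion] at hxX
          obtain ⟨i, hi, hxi⟩ := Finset.mem_biUnion.1 hxX
          exact ⟨i, hi, hxS, hxi⟩
        · rintro ⟨i, -, hxS, -⟩; exact hxS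
      calc ∑ i ∈ Finset.Icc 1 m, SUM (S ∩ Xs i)
          = ((Finset.Icc 1 m).biUnion (fun i => S ∩ Xs i)).sum id :=
            (Finset.sum_biUnion (hpd _ hsub)).symm
        _ = SUM S := by rw [← hSeq]; rfl
  · rintro ⟨hy, hyt⟩
    refine ⟨?_, hyt⟩
    rw [Set.mem_finset_sum] at hy
    obtain ⟨g, hg, hsum⟩ := hy
    have hex : ∀ i ∈ Finset.Icc 1 m, ∃ S, S ⊆ Xs i ∧ SUM S = g i := by
      intro i hi
      obtain ⟨⟨S, hS, -, hs⟩, -⟩ := hg hi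
      exact ⟨S, hS, hs⟩
    choose! F hF1 hF2 using hex
    refine ⟨(Finset.Icc 1 m).biUnion F, ?_, ?_⟩
    · intro x hx
      obtain ⟨i, hi, hxi⟩ := Finset.mem_biUnion.1 hx
      exact ((hXs i x).1 (hF1 i hi hxi)).1
    · calc SUM ((Finset.Icc 1 m).biUnion F)
          = ∑ i ∈ Finset.Icc 1 m, SUM (F i) := Finset.sum_biUnion (hpd F hF1)
        _ = ∑ i ∈ Finset.Icc 1 m, g i := Finset.sum_congr rfl hF2
        _ = y := hsum
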